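/- A policy attaining the pointwise minimum in the dynamic programming equation with optimized lookahead is optimal: if V_st is the unique fixed point of T_O and μ* = (π*, τ*) is a stationary self-triggering policy such that V_st(x) = c̄(x, π*(x), τ*(x)) + β^{τ*(x)} · ( O + E_{y∼P̄(x, π*(x), τ*(x))}[V_st(y)] ) for all x ∈ X, then the evaluation fixed point f^{μ*} of T_{μ*} equals V_st, and f^{μ*}(x) ≤ f^{μ}(x) for every stationary self-triggering policy μ and every x ∈ X. -/

import Mathlib

open scoped BigOperators

/-- Expectation of `f` under a probability mass function `p` on a finite type. -/
noncomputable def expect {X : Type*} [Fintype X] (p : PMF X) (f : X → ℝ) : ℝ :=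
  ∑ y, (p y).toReal * f y

/-- The classic Bellman operator `(T v)(x) = min_a ( c(x,a) + β · E_{y∼P(x,a)}[v(y)] )`. -/
noncomputable def bellman {X A : Type*} [Fintype X] [Fintype A]
    (P : X → A → PMF X) (c : X × A → ℝ) (β : ℝ) (v : X → ℝ) : X → ℝ :=
  fun x => ⨅ a : A, (c (x, a) + β * expect (P x a) v)

/-- The skip kernel: distribution of the state after `t` steps from `x`, holding action `a`. -/
noncomputable def skip {X A : Type*} (P : X → A → PMF X) (x : X) (a : A) : ℕ → PMF X
  | 0 => PMF.pure x
  | t + 1 => (skip P x a t).bind fun y => P y a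

/-- The consolidated cost `c̄(x,a,Δt) = ∑_{t=0}^{Δt−1} β^t · E_{y∼P̄(x,a,t)}[c(y,a)]`. -/
noncomputable def cbar {X A : Type*} [Fintype X]
    (P : X → A → PMF X) (c : X × A → ℝ) (β : ℝ) (x : X) (a : A) (Δt : ℕ) : ℝ :=
  ∑ t ∈ Finset.range Δt, β ^ t * expect (skip P x a t) (fun y => c (y, a))

/-- The optimized-lookahead Bellman operator
`(T_O v)(x) = min_{a, 1 ≤ Δt ≤ T̄} ( c̄(x,a,Δt) + β^Δt ( O + E_{y∼P̄(x,a,Δt)}[v(y)] ) )`. -/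
noncomputable def TO {X A : Type*} [Fintype X] [Fintype A]
    (P : X → A → PMF X) (c : X × A → ℝ) (β O : ℝ) (Tb : ℕ) (v : X → ℝ) : X → ℝ :=
  fun x => ⨅ a : A, ⨅ Δt : {n : ℕ // n ∈ Finset.Icc 1 Tb},
    (cbar P c β x a Δt.val + β ^ Δt.val * (O + expect (skip P x a Δt.val) v))

/-- The evaluation operator of a stationary self-triggering policy `μ = (π, τ)`. -/
noncomputable def Tpol {X A : Type*} [Fintype X]
    (P : X → A → PMF X) (c : X × A → ℝ) (β O : ℝ)
    (π : X → A) (τ : X → ℕ) (v : X → ℝ) : X → ℝ :=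
  fun x => cbar P c β x (π x) (τ x) + β ^ (τ x) * (O + expect (skip P x (π x) (τ x)) v)

lemma pmf_sum_toReal' {X : Type*} [Fintype X] (p : PMF X) : ∑ y, (p y).toReal = 1 := by
  rw [← ENNReal.toReal_sum (fun y _ => PMF.apply_ne_top p y), ← tsum_fintype (L := SummationFilter.unconditional _), p.tsum_coe,
    ENNReal.toReal_one]

lemma expect_le_const' {X : Type*} [Fintype X] (p : PMF X) (f : X → ℝ) (M : ℝ)
    (h : ∀ y, f y ≤ M) : expect p f ≤ M := by
  calc expect p f ≤ ∑ y, (p y).toReal * M :=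
        Finset.sum_le_sum (fun y _ => mul_le_mul_of_nonneg_left (h y) ENNReal.toReal_nonneg)
  _ = M := by rw [← Finset.sum_mul, pmf_sum_toReal', one_mul]

lemma expect_sub' {X : Type*} [Fintype X] (p : PMF X) (f g : X → ℝ) :
    expect p f - expect p g = expect p (fun y => f y - g y) := by
  simp [expect, mul_sub, Finset.sum_sub_distrib]

lemma key_compare {X A : Type*} [Fintype X] [Nonempty X]
    (P : X → A → PMF X) (c : X × A → ℝ) (β O : ℝ) (hβ0 : 0 ≤ β) (hβ1 : β < 1)
    (π : X → A) (τ : X → ℕ) (hτ : ∀ x, 1 ≤ τ x) (u v : X → ℝ)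
    (hu : ∀ x, u x ≤ Tpol P c β O π τ u x) (hv : Tpol P c β O π τ v = v) :
    ∀ x, u x ≤ v x := by
  set M := Finset.univ.sup' Finset.univ_nonempty (fun x => u x - v x) with hMdef
  have hle : ∀ x : X, u x - v x ≤ M := by
    intro x
    rw [hMdef]
    exact Finset.le_sup' (fun x => u x - v x) (Finset.mem_univ x)
  set M' := max M 0 with hM'def
  have hstep : ∀ x, u x - v x ≤ β * M' := by
    intro x
    have h1 : u x - v x ≤ Tpol P c β O π τ u x - Tpol P c β O π τ v x := by
      have h := hu x
      have h' := congrFun hv x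
      linarith [h'.ge, h'.le]
    have h2 : Tpol P c β O π τ u x - Tpol P c β O π τ v x
        = β ^ τ x * expect (skip P x (π x) (τ x)) (fun y => u y - v y) := by
      simp only [Tpol]
      rw [← expect_sub']
      ring
    have h3 : expect (skip P x (π x) (τ x)) (fun y => u y - v y) ≤ M' :=
      expect_le_const' _ _ _ (fun y => (hle y).trans (le_max_left _ _))
    have h4 : β ^ τ x * expect (skip P x (π x) (τ x)) (fun y => u y - v y)
        ≤ β ^ τ x * M' := mul_le_mul_of_nonneg_left h3 (pow_nonneg hβ0 _)
    have h5 : β ^ τ x * M' ≤ β * M' := by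
      have hpow : β ^ τ x ≤ β ^ 1 := pow_le_pow_of_le_one hβ0 hβ1.le (hτ x)
      simpa using mul_le_mul_of_nonneg_right hpow (le_max_right M 0)
    linarith
  have hM0 : M ≤ 0 := by
    by_contra h
    push_neg at h
    have hM' : M' = M := max_eq_left h.le
    obtain ⟨x, -, hx⟩ := Finset.exists_mem_eq_sup' Finset.univ_nonempty (fun x => u x - v x)
    have hx' : u x - v x = M := hx.symm
    have := hstep x
    nlinarith
  intro x
  linarith [hle x]

theorem attaining_policy_is_optimal {X A : Type*} [Fintype X] [Nonempty X] [Fintype A] [Nonempty A]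
    (P : X → A → PMF X) (c : X × A → ℝ) (hc : ∀ (x : X) (a : A), 0 ≤ c (x, a))
    (β : ℝ) (hβ0 : 0 ≤ β) (hβ1 : β < 1)
    (O : ℝ) (hO : 0 ≤ O) (Tb : ℕ) (hTb : 1 ≤ Tb)
    (Vst : X → ℝ) (hVst : TO P c β O Tb Vst = Vst)
    (πs : X → A) (τs : X → ℕ) (hτs : ∀ x : X, 1 ≤ τs x ∧ τs x ≤ Tb)
    (hmin : ∀ x : X, Vst x = cbar P c β x (πs x) (τs x) +
      β ^ (τs x) * (O + expect (skip P x (πs x) (τs x)) Vst))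
    (fs : X → ℝ) (hfs : Tpol P c β O πs τs fs = fs) :
    fs = Vst ∧ ∀ (π : X → A) (τ : X → ℕ), (∀ x : X, 1 ≤ τ x ∧ τ x ≤ Tb) →
      ∀ fμ : X → ℝ, Tpol P c β O π τ fμ = fμ → ∀ x : X, fs x ≤ fμ x := by
  have hVfix : Tpol P c β O πs τs Vst = Vst := funext fun x => (hmin x).symm
  have h1 : ∀ x, Vst x ≤ fs x :=
    key_compare P c β O hβ0 hβ1 πs τs (fun x => (hτs x).1) Vst fs
      (fun x => (hmin x).le) hfs
  have h2 : ∀ x, fs x ≤ Vst x :=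
    key_compare P c β O hβ0 hβ1 πs τs (fun x => (hτs x).1) fs Vst
      (fun x => (congrFun hfs x).ge) hVfix
  have hfsV : fs = Vst := funext fun x => le_antisymm (h2 x) (h1 x)
  refine ⟨hfsV, ?_⟩
  intro π τ hτ fμ hfμ x
  have hVle : ∀ z, Vst z ≤ Tpol P c β O π τ Vst z := by
    intro z
    have hb : TO P c β O Tb Vst z ≤ cbar P c β z (π z) (τ z)
        + β ^ (τ z) * (O + expect (skip P z (π z) (τ z)) Vst) := by
      refine le_trans (ciInf_le (Finite.bddBelow_range _) (π z))
        (ciInf_le (Finite.bddBelow_range _)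
          (⟨τ z, Finset.mem_Icc.mpr ⟨(hτ z).1, (hτ z).2⟩⟩ : {n : ℕ // n ∈ Finset.Icc 1 Tb}))
    calc Vst z = TO P c β O Tb Vst z := (congrFun hVst z).symm
    _ ≤ _ := hb
  have := key_compare P c β O hβ0 hβ1 π τ (fun z => (hτ z).1) Vst fμ hVle hfμ x
  rw [hfsV]
  exact this
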